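/- Let e ≥ 1 and Δ be integers with 1 ≤ Δ < 2^e, and set m = 2^e + Δ. If t is an integer with 2Δ + 1 ≤ t ≤ 2^e such that C(t−Δ−1, Δ) is odd, and A = 2^{⌊log₂(2Δ)⌋}, then C(2m−t, m) + C(2m−A−t, m−t) is odd. -/

import Mathlib

section Aux

open Nat

private lemma kummer_fuel : ∀ n a b : ℕ, a + b ≤ n →
    (Odd ((a + b).choose a) ↔ ∀ i, ¬(a.testBit i = true ∧ b.testBit i = true)) := by
  intro n
  induction n with
  | zero =>
    intro a b h
    have ha : a = 0 := by omega
    have hb : b = 0 := by omega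
    subst ha hb
    simp
  | succ n ih =>
    intro a b h
    rcases Nat.eq_zero_or_pos a with ha | ha
    · subst ha; simp
    rcases Nat.eq_zero_or_pos b with hb | hb
    · subst hb; simp
    have step : (a + b).choose a % 2 =
        (((a + b) % 2).choose (a % 2) * ((a + b) / 2).choose (a / 2)) % 2 :=
      Choose.choose_modEq_choose_mod_mul_choose_div_nat (p := 2)
    have hbit0a : a.testBit 0 = decide (a % 2 = 1) := Nat.testBit_zero a
    have hbit0b : b.testBit 0 = decide (b % 2 = 1) := Nat.testBit_zero b
    rcases Nat.mod_two_eq_zero_or_one a with ha2 | ha2 <;>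
        rcases Nat.mod_two_eq_zero_or_one b with hb2 | hb2
    · -- both even
      have hab2 : (a + b) % 2 = 0 := by omega
      have hdiv : (a + b) / 2 = a / 2 + b / 2 := by omega
      rw [Nat.odd_iff, step, hab2, ha2, hdiv]
      have ihh := ih (a / 2) (b / 2) (by omega)
      rw [Nat.odd_iff] at ihh
      simp only [Nat.choose_self, Nat.choose_zero_right, one_mul]
      rw [ihh]
      constructor
      · intro H i
        cases i with
        | zero => simp [hbit0a, ha2]
        | succ j =>
          have := H j
          simpa [Nat.testBit_add_one] using this
      · intro H i
        have := H (i + 1)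
        simpa [Nat.testBit_add_one] using this
    · -- a even, b odd
      have hab2 : (a + b) % 2 = 1 := by omega
      have hdiv : (a + b) / 2 = a / 2 + b / 2 := by omega
      rw [Nat.odd_iff, step, hab2, ha2, hdiv]
      have ihh := ih (a / 2) (b / 2) (by omega)
      rw [Nat.odd_iff] at ihh
      simp only [Nat.choose_zero_right, one_mul]
      rw [ihh]
      constructor
      · intro H i
        cases i with
        | zero => simp [hbit0a, ha2]
        | succ j =>
          have := H j
          simpa [Nat.testBit_add_one] using this
      · intro H i
        have := H (i + 1)
        simpa [Nat.testBit_add_one] using this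
    · -- a odd, b even
      have hab2 : (a + b) % 2 = 1 := by omega
      have hdiv : (a + b) / 2 = a / 2 + b / 2 := by omega
      rw [Nat.odd_iff, step, hab2, ha2, hdiv]
      have ihh := ih (a / 2) (b / 2) (by omega)
      rw [Nat.odd_iff] at ihh
      simp only [Nat.choose_self, one_mul]
      rw [ihh]
      constructor
      · intro H i
        cases i with
        | zero => simp [hbit0b, hb2]
        | succ j =>
          have := H j
          simpa [Nat.testBit_add_one] using this
      · intro H i
        have := H (i + 1)
        simpa [Nat.testBit_add_one] using this
    · -- both odd: choose is even, and bit 0 collides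
      have hab2 : (a + b) % 2 = 0 := by omega
      rw [Nat.odd_iff, step, hab2, ha2]
      simp only [Nat.choose_one_right]
      constructor
      · intro H
        exfalso
        simp [Nat.choose] at H
      · intro H
        exfalso
        exact H 0 ⟨by simp [hbit0a, ha2], by simp [hbit0b, hb2]⟩

private lemma kummer (a b : ℕ) :
    Odd ((a + b).choose a) ↔ ∀ i, ¬(a.testBit i = true ∧ b.testBit i = true) :=
  kummer_fuel (a + b) a b le_rfl

private lemma testBit_add_disjoint_fuel : ∀ n a b : ℕ, a + b ≤ n →
    (∀ i, ¬(a.testBit i = true ∧ b.testBit i = true)) →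
    ∀ i, (a + b).testBit i = (a.testBit i || b.testBit i) := by
  intro n
  induction n with
  | zero =>
    intro a b h _ i
    have ha : a = 0 := by omega
    have hb : b = 0 := by omega
    subst ha hb; simp
  | succ n ih =>
    intro a b h hdisj i
    rcases Nat.eq_zero_or_pos a with ha | ha
    · subst ha; simp
    rcases Nat.eq_zero_or_pos b with hb | hb
    · subst hb; simp
    have hbit0 : ¬(a % 2 = 1 ∧ b % 2 = 1) := by
      intro ⟨h1, h2⟩
      exact hdisj 0 ⟨by simp [Nat.testBit_zero, h1], by simp [Nat.testBit_zero, h2]⟩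
    have hdiv : (a + b) / 2 = a / 2 + b / 2 := by omega
    cases i with
    | zero =>
      simp only [Nat.testBit_zero]
      rcases Nat.mod_two_eq_zero_or_one a with ha2 | ha2 <;>
          rcases Nat.mod_two_eq_zero_or_one b with hb2 | hb2 <;>
        simp [ha2, hb2] <;> omega
    | succ j =>
      simp only [Nat.testBit_add_one, hdiv]
      rw [ih (a / 2) (b / 2) (by omega)]
      intro k hk
      have := hdisj (k + 1)
      simp [Nat.testBit_add_one] at this
      have h2 := this hk.1
      rw [hk.2] at h2
      simp at h2

private lemma testBit_log_self {y : ℕ} (hy : y ≠ 0) : y.testBit (Nat.log 2 y) = true := by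
  have h1 : 2 ^ Nat.log 2 y ≤ y := Nat.pow_log_le_self 2 hy
  have h2 : y < 2 ^ (Nat.log 2 y).succ := Nat.lt_pow_succ_log_self (by norm_num) y
  rw [pow_succ] at h2
  rw [Nat.testBit_eq_decide_div_mod_eq]
  have : y / 2 ^ Nat.log 2 y = 1 :=
    Nat.div_eq_of_lt_le (by simpa using h1) (by omega)
  simp [this]

end Aux

/-- Proposition 2.5(2c): with `m = 2^e + Δ`, `1 ≤ Δ < 2^e`, `2Δ+1 ≤ t ≤ 2^e`,
`C(t-Δ-1, Δ)` odd, and `A = 2^{⌊log₂(2Δ)⌋}`, the sum `C(2m-t, m) + C(2m-A-t, m-t)`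
is odd. -/
theorem stmt_6 (e Δ m t A : ℕ) (he : 1 ≤ e) (hΔ1 : 1 ≤ Δ) (hΔ2 : Δ < 2 ^ e)
    (hm : m = 2 ^ e + Δ) (ht1 : 2 * Δ + 1 ≤ t) (ht2 : t ≤ 2 ^ e)
    (hodd : Odd (Nat.choose (t - Δ - 1) Δ)) (hA : A = 2 ^ Nat.log 2 (2 * Δ)) :
    Odd (Nat.choose (2 * m - t) m + Nat.choose (2 * m - A - t) (m - t)) := by
  -- notation
  set ℓ := Nat.log 2 (2 * Δ) with hℓ
  have hA1 : 2 ^ ℓ ≤ 2 * Δ := Nat.pow_log_le_self 2 (by omega)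
  have hA2 : 2 * Δ < 2 ^ (ℓ + 1) := Nat.lt_pow_succ_log_self (by norm_num) _
  rw [pow_succ] at hA2
  have hℓ1 : 1 ≤ ℓ := by
    rcases Nat.eq_zero_or_pos ℓ with h | h
    · rw [h] at hA2; simp at hA2; omega
    · exact h
  have hΔA : Δ < A := by omega
  have hAΔ : A ≤ 2 * Δ := by omega
  -- Δ ≥ 2^(ℓ-1), A - Δ ≤ 2^(ℓ-1)
  have hpow : 2 ^ ℓ = 2 * 2 ^ (ℓ - 1) := by
    conv_lhs => rw [show ℓ = (ℓ - 1) + 1 by omega]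
    rw [pow_succ]; ring
  have hΔlow : 2 ^ (ℓ - 1) ≤ Δ := by omega
  have hAΔlow : A - Δ ≤ 2 ^ (ℓ - 1) := by omega
  have hmt : t ≤ m := by omega
  have hc : t - Δ - 1 = Δ + (t - 2 * Δ - 1) := by omega
  set c := t - 2 * Δ - 1 with hcdef
  rw [hc] at hodd
  have hdisj : ∀ i, ¬(Δ.testBit i = true ∧ c.testBit i = true) := (kummer Δ c).mp hodd
  -- bits of s - 1 = Δ + c where s = t - Δ
  have hs1 : ∀ i, (Δ + c).testBit i = (Δ.testBit i || c.testBit i) :=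
    testBit_add_disjoint_fuel (Δ + c) Δ c le_rfl hdisj
  -- m - t = 2^e - ((Δ + c) + 1)
  have hmt_eq : m - t = 2 ^ e - ((Δ + c) + 1) := by omega
  have hΔc_lt : Δ + c < 2 ^ e := by omega
  have hmt_bit : ∀ i, (m - t).testBit i = (decide (i < e) && !(Δ + c).testBit i) := by
    intro i
    rw [hmt_eq]
    exact Nat.testBit_two_pow_sub_succ hΔc_lt i
  -- bits of m
  have hm_bit : ∀ i, m.testBit i = (decide (i = e) || Δ.testBit i) := by
    intro i
    rcases lt_trichotomy i e with h | h | h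
    · rw [hm, Nat.testBit_two_pow_add_gt h]
      simp [Nat.ne_of_lt h]
    · subst h
      rw [hm, Nat.testBit_two_pow_add_eq]
      simp [Nat.testBit_lt_two_pow hΔ2]
    · rw [hm]
      have h1 : 2 ^ e + Δ < 2 ^ i := by
        have : 2 ^ (e + 1) ≤ 2 ^ i := Nat.pow_le_pow_right (by norm_num) (by omega)
        rw [pow_succ] at this; omega
      rw [Nat.testBit_lt_two_pow h1]
      have h2 : Δ < 2 ^ i := by omega
      simp [Nat.testBit_lt_two_pow h2, Nat.ne_of_gt h]
  -- First term is odd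
  have hX : Odd (Nat.choose (2 * m - t) m) := by
    have h2mt : 2 * m - t = m + (m - t) := by omega
    rw [h2mt, kummer]
    intro i ⟨h1, h2⟩
    rw [hm_bit i] at h1
    rw [hmt_bit i] at h2
    simp only [Bool.and_eq_true, Bool.not_eq_true', decide_eq_true_eq] at h2
    obtain ⟨hie, h2⟩ := h2
    simp only [Bool.or_eq_true, decide_eq_true_eq] at h1
    rcases h1 with h1 | h1
    · omega
    · rw [hs1 i, h1] at h2; simp at h2
  -- Second term is even
  have hY : Even (Nat.choose (2 * m - A - t) (m - t)) := by
    have h2mAt : 2 * m - A - t = (m - t) + (m - A) := by omega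
    rw [h2mAt, Nat.not_odd_iff_even.symm, kummer]
    intro H
    set j := Nat.log 2 (m - t) with hj
    have hmt0 : m - t ≠ 0 := by omega
    have hjbit : (m - t).testBit j = true := testBit_log_self hmt0
    have hje : j < e := by
      have : m - t < 2 ^ e := by omega
      exact (Nat.log_lt_iff_lt_pow (by norm_num) hmt0).mpr this
    have hjℓ : ℓ - 1 ≤ j := by
      have : 2 ^ (ℓ - 1) ≤ m - t := by omega
      exact (Nat.le_log_iff_pow_le (by norm_num) hmt0).mpr this
    have hmA_eq : m - A = 2 ^ e - ((A - Δ - 1) + 1) := by omega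
    have hmA_bit : (m - A).testBit j = true := by
      rw [hmA_eq, Nat.testBit_two_pow_sub_succ (by omega)]
      have hlt : A - Δ - 1 < 2 ^ j := by
        have : 2 ^ (ℓ - 1) ≤ 2 ^ j := Nat.pow_le_pow_right (by norm_num) hjℓ
        omega
      simp [hje, Nat.testBit_lt_two_pow hlt]
    exact H j ⟨hjbit, hmA_bit⟩
  exact hX.add_even hY
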